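/- (Adaptive lower bound in the forward-march setting) Let π be a permutation and let o_1, …, o_ℓ be a sequence of forward-march operations, each an FM prefix reversal or an FM prefix transposition, that transforms π into the identity permutation, and suppose exactly r of the operations o_1, …, o_ℓ are FM prefix reversals. Then 3ℓ ≥ b′(π) + r, i.e., ℓ ≥ (b′(π) + r)/3. (This yields the adaptive approximation ratio 3 − 3r/(b′(π)+r) for SortByRTwFM3 when an optimal algorithm applies r prefix reversals.) -/
import Mathlib


/-- A permutation on `n` elements: a list `[π₀, π₁, …, π_{n+1}]` of distinct
naturals that is a rearrangement of `0, 1, …, n+1` with `π₀ = 0` and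
`π_{n+1} = n+1`. -/
def IsPerm (n : ℕ) (π : List ℕ) : Prop :=
  π.Perm (List.range (n + 2)) ∧ π.getD 0 0 = 0 ∧ π.getD (n + 1) 0 = n + 1

/-- Breakpoint count `b(π)`: `1` plus the number of indices `i` with
`2 ≤ i ≤ n+1` and `|π_i − π_{i−1}| ≠ 1` (these are exactly the consecutive
pairs of the tail `π₁, …, π_{n+1}`). -/
def bp (π : List ℕ) : ℕ :=
  1 + ((π.drop 1).zip (π.drop 2)).countP
        (fun p => !(p.1 + 1 == p.2 || p.2 + 1 == p.1))

/-- Redefined breakpoint count `b′(π)`: the number of indices `i` with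
`1 ≤ i ≤ n+1` and `|π_i − π_{i−1}| ≠ 1`. -/
def bp' (π : List ℕ) : ℕ :=
  (π.zip (π.drop 1)).countP
    (fun p => !(p.1 + 1 == p.2 || p.2 + 1 == p.1))

/-- Prefix reversal `β(1,j)`: `[π₀, π_{j−1}, …, π₁, π_j, …, π_{n+1}]`. -/
def prefixReversal (π : List ℕ) (j : ℕ) : List ℕ :=
  π.take 1 ++ ((π.drop 1).take (j - 1)).reverse ++ π.drop j

/-- Prefix transposition `τ(1,j,k)`:
`[π₀, π_j, …, π_{k−1}, π₁, …, π_{j−1}, π_k, …, π_{n+1}]`. -/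
def prefixTransposition (π : List ℕ) (j k : ℕ) : List ℕ :=
  π.take 1 ++ (π.drop j).take (k - j) ++ (π.drop 1).take (j - 1) ++ π.drop k

/-- Prefix transreversal `βτ(1,j,k)`:
`[π₀, π_j, …, π_{k−1}, π_{j−1}, …, π₁, π_k, …, π_{n+1}]`. -/
def prefixTransreversal (π : List ℕ) (j k : ℕ) : List ℕ :=
  π.take 1 ++ (π.drop j).take (k - j) ++ ((π.drop 1).take (j - 1)).reverse ++ π.drop k

/-- A prefix operation: a prefix reversal, a prefix transposition, or a
prefix transreversal. -/
inductive PrefOp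
  | rev (j : ℕ)
  | trans (j k : ℕ)
  | transrev (j k : ℕ)

/-- Apply a prefix operation to a permutation. -/
def PrefOp.apply (π : List ℕ) : PrefOp → List ℕ
  | .rev j => prefixReversal π j
  | .trans j k => prefixTransposition π j k
  | .transrev j k => prefixTransreversal π j k

/-- Validity of a prefix operation on a permutation of `n` elements:
`3 ≤ j ≤ n+1` for a prefix reversal, `2 ≤ j < k ≤ n+1` for a prefix
transposition or a prefix transreversal. -/
def PrefOp.Valid (n : ℕ) : PrefOp → Prop
  | .rev j => 3 ≤ j ∧ j ≤ n + 1
  | .trans j k => 2 ≤ j ∧ j < k ∧ k ≤ n + 1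
  | .transrev j k => 2 ≤ j ∧ j < k ∧ k ≤ n + 1

/-- Is the operation a prefix reversal? -/
def PrefOp.isRev : PrefOp → Bool
  | .rev _ => true
  | _ => false

/-- Is the operation a prefix transreversal? -/
def PrefOp.isTransrev : PrefOp → Bool
  | .transrev _ _ => true
  | _ => false

/-- Apply a sequence of prefix operations, left to right. -/
def applySeq : List ℕ → List PrefOp → List ℕ
  | π, [] => π
  | π, o :: os => applySeq (o.apply π) os

/-- All operations in the sequence are valid for permutations of `n` elements. -/
def ValidSeq (n : ℕ) (ops : List PrefOp) : Prop :=
  ∀ o ∈ ops, o.Valid n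

/-- `fm π` is `m(π) + 1`, where `m(π)` is the largest index `m` such that
`π_i = i` for all `0 ≤ i ≤ m`; i.e. the length of the longest already-sorted
prefix of `π`. -/
def fm (π : List ℕ) : ℕ :=
  ((List.range π.length).takeWhile (fun i => π.getD i 0 == i)).length

/-- Forward-march prefix reversal: reverses the segment
`π_{m(π)+1}, …, π_{j−1}` in place. -/
def fmPrefixReversal (π : List ℕ) (j : ℕ) : List ℕ :=
  π.take (fm π) ++ ((π.drop (fm π)).take (j - fm π)).reverse ++ π.drop j

/-- Forward-march prefix transposition: cuts the segment
`π_{m(π)+1}, …, π_{j−1}` and pastes it between `π_{k−1}` and `π_k`. -/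
def fmPrefixTransposition (π : List ℕ) (j k : ℕ) : List ℕ :=
  π.take (fm π) ++ (π.drop j).take (k - j) ++
    (π.drop (fm π)).take (j - fm π) ++ π.drop k

/-- A forward-march operation: an FM prefix reversal or an FM prefix
transposition. -/
inductive FMOp
  | rev (j : ℕ)
  | trans (j k : ℕ)

/-- Apply a forward-march operation. -/
def FMOp.apply (π : List ℕ) : FMOp → List ℕ
  | .rev j => fmPrefixReversal π j
  | .trans j k => fmPrefixTransposition π j k

/-- Validity of a forward-march operation on a permutation `π` of `n`
elements: `m(π)+3 ≤ j ≤ n+1` for an FM prefix reversal, and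
`m(π)+2 ≤ j ≤ n`, `j < k ≤ n+1` for an FM prefix transposition
(recall `fm π = m(π) + 1`). -/
def FMOp.Valid (n : ℕ) (π : List ℕ) : FMOp → Prop
  | .rev j => fm π + 2 ≤ j ∧ j ≤ n + 1
  | .trans j k => fm π + 1 ≤ j ∧ j ≤ n ∧ j < k ∧ k ≤ n + 1

/-- Is the forward-march operation an FM prefix reversal? -/
def FMOp.isRev : FMOp → Bool
  | .rev _ => true
  | _ => false

/-- Apply a sequence of forward-march operations, left to right. -/
def applyFMSeq : List ℕ → List FMOp → List ℕ
  | π, [] => π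
  | π, o :: os => applyFMSeq (o.apply π) os

/-- Validity of a sequence of forward-march operations, where each operation
must be valid for the permutation obtained after applying the previous ones. -/
def FMValidSeq (n : ℕ) : List ℕ → List FMOp → Prop
  | _, [] => True
  | π, o :: os => o.Valid n π ∧ FMValidSeq n (o.apply π) os

def badB (a b : ℕ) : Bool := !(a + 1 == b || b + 1 == a)

def junc (X Y : List ℕ) : ℕ :=
  match X.getLast?, Y.head? with
  | some a, some b => if badB a b then 1 else 0
  | _, _ => 0

lemma bp'_nil : bp' [] = 0 := rfl
lemma bp'_single (a : ℕ) : bp' [a] = 0 := rfl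

lemma bp'_cons_cons (a b : ℕ) (l : List ℕ) :
    bp' (a :: b :: l) = (if badB a b then 1 else 0) + bp' (b :: l) := by
  simp [bp', badB, List.countP_cons]
  omega

lemma junc_le_one (X Y : List ℕ) : junc X Y ≤ 1 := by
  unfold junc
  rcases X.getLast? with _ | a <;> rcases Y.head? with _ | b <;> simp <;> split <;> simp

lemma bp'_append (X Y : List ℕ) :
    bp' (X ++ Y) = bp' X + bp' Y + junc X Y := by
  induction X with
  | nil => simp [bp'_nil, junc]
  | cons a X ih =>
    cases X with
    | nil =>
      cases Y with
      | nil => simp [bp'_nil, bp'_single, junc]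
      | cons b Y =>
        simp only [List.singleton_append, bp'_cons_cons, bp'_single, junc,
          List.getLast?_singleton, List.head?_cons]
        omega
    | cons b X =>
      have h1 : (a :: b :: X) ++ Y = a :: b :: (X ++ Y) := rfl
      rw [h1, bp'_cons_cons, bp'_cons_cons]
      have h2 : junc (a :: b :: X) Y = junc (b :: X) Y := by
        unfold junc
        rw [List.getLast?_cons_cons]
      have := ih
      simp only [List.cons_append] at this
      rw [this, h2]
      omega

lemma badB_symm (a b : ℕ) : badB a b = badB b a := by
  simp [badB, Bool.or_comm]

lemma bp'_reverse (L : List ℕ) : bp' L.reverse = bp' L := by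
  induction L with
  | nil => rfl
  | cons a L ih =>
    rw [List.reverse_cons, bp'_append, ih, bp'_single]
    cases L with
    | nil => simp [junc, bp'_nil, bp'_single]
    | cons b L =>
      rw [bp'_cons_cons]
      have : junc (b :: L).reverse [a] = if badB a b then 1 else 0 := by
        unfold junc
        rw [List.getLast?_reverse]
        simp [badB_symm a b]
      rw [this]
      omega

lemma bp'_range' (s : ℕ) : ∀ m, bp' (List.range' s m) = 0 := by
  intro m
  induction m generalizing s with
  | zero => rfl
  | succ m ih =>
    cases m with
    | zero => exact bp'_single s
    | succ m =>
      rw [List.range'_succ, List.range'_succ, bp'_cons_cons]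
      rw [← List.range'_succ]
      rw [ih (s+1)]
      simp [badB]

lemma bp'_range (m : ℕ) : bp' (List.range m) = 0 := by
  rw [List.range_eq_range']; exact bp'_range' 0 m

lemma take_seg (l : List ℕ) (a j : ℕ) (h : a ≤ j) :
    l.take a ++ (l.drop a).take (j - a) = l.take j := by
  rw [← List.drop_take,
    show l.take a = (l.take j).take a by rw [List.take_take, min_eq_left h]]
  exact List.take_append_drop a (l.take j)

lemma decomp2 (l : List ℕ) (a j : ℕ) (h : a ≤ j) :
    l = l.take a ++ (l.drop a).take (j - a) ++ l.drop j := by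
  rw [take_seg l a j h, List.take_append_drop]

lemma decomp3 (l : List ℕ) (a j k : ℕ) (ha : a ≤ j) (hj : j ≤ k) :
    l = l.take a ++ (l.drop a).take (j - a) ++ (l.drop j).take (k - j) ++ l.drop k := by
  conv_lhs => rw [← List.take_append_drop k l, ← take_seg l j k hj,
    ← take_seg l a j ha]

lemma rev_bound (π : List ℕ) (j : ℕ) (h : fm π ≤ j) :
    bp' π ≤ bp' (fmPrefixReversal π j) + 2 := by
  set a := fm π with ha
  set A := π.take a
  set B := (π.drop a).take (j - a)
  set C := π.drop j
  have hd : π = A ++ B ++ C := decomp2 π a j h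
  have h1 : bp' π ≤ bp' A + bp' B + bp' C + 2 := by
    rw [hd, bp'_append, bp'_append]
    have := junc_le_one A B
    have := junc_le_one (A ++ B) C
    omega
  have h2 : bp' A + bp' B.reverse + bp' C ≤ bp' (A ++ B.reverse ++ C) := by
    rw [bp'_append, bp'_append]; omega
  rw [bp'_reverse] at h2
  have he : fmPrefixReversal π j = A ++ B.reverse ++ C := rfl
  rw [he]
  omega

lemma trans_bound (π : List ℕ) (j k : ℕ) (h : fm π ≤ j) (hjk : j ≤ k) :
    bp' π ≤ bp' (fmPrefixTransposition π j k) + 3 := by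
  set a := fm π with ha
  set A := π.take a
  set B1 := (π.drop a).take (j - a)
  set B2 := (π.drop j).take (k - j)
  set C := π.drop k
  have hd : π = A ++ B1 ++ B2 ++ C := decomp3 π a j k h hjk
  have h1 : bp' π ≤ bp' A + bp' B1 + bp' B2 + bp' C + 3 := by
    rw [hd, bp'_append, bp'_append, bp'_append]
    have := junc_le_one A B1
    have := junc_le_one (A ++ B1) B2
    have := junc_le_one (A ++ B1 ++ B2) C
    omega
  have h2 : bp' A + bp' B2 + bp' B1 + bp' C ≤ bp' (A ++ B2 ++ B1 ++ C) := by
    rw [bp'_append, bp'_append, bp'_append]; omega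
  have he : fmPrefixTransposition π j k = A ++ B2 ++ B1 ++ C := rfl
  rw [he]
  omega

lemma key_lemma (n : ℕ) : ∀ ops : List FMOp, ∀ π : List ℕ,
    FMValidSeq n π ops → applyFMSeq π ops = List.range (n + 2) →
    bp' π + ops.countP FMOp.isRev ≤ 3 * ops.length := by
  intro ops
  induction ops with
  | nil =>
    intro π _ hs
    have : π = List.range (n + 2) := hs
    rw [this]
    simp [bp'_range]
  | cons o os ih =>
    intro π hv hs
    have hvo : o.Valid n π := hv.1
    have hvs : FMValidSeq n (o.apply π) os := hv.2
    have ih' := ih (o.apply π) hvs hs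
    cases o with
    | rev j =>
      have hj : fm π ≤ j := by
        obtain ⟨h1, h2⟩ := hvo; omega
      have hb := rev_bound π j hj
      simp only [List.countP_cons, List.length_cons, FMOp.isRev, FMOp.apply, if_true] at *
      omega
    | trans j k =>
      have hj : fm π ≤ j := by
        obtain ⟨h1, h2, h3, h4⟩ := hvo; omega
      have hjk : j ≤ k := by
        obtain ⟨h1, h2, h3, h4⟩ := hvo; omega
      have hb := trans_bound π j k hj hjk
      simp only [List.countP_cons, List.length_cons, FMOp.isRev, FMOp.apply,
        Bool.false_eq_true, if_false] at *
      omega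

/-- adaptive lower bound, forward-march setting: if a sequence
of `ℓ` forward-march operations sorts `π` and exactly `r` of them are FM
prefix reversals, then `3ℓ ≥ b′(π) + r`. -/
theorem sortFM_adaptive_lower_bound
    (n : ℕ) (π : List ℕ) (hπ : IsPerm n π)
    (ops : List FMOp) (hval : FMValidSeq n π ops)
    (hsort : applyFMSeq π ops = List.range (n + 2))
    (r : ℕ) (hr : ops.countP FMOp.isRev = r) :
    bp' π + r ≤ 3 * ops.length := by
  subst hr
  exact key_lemma n ops π hval hsort
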